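/- Let K be a field, ν : K* → G a demi-valuation into a lattice-ordered abelian group, and A = R(ν) the valuation ring. If ν satisfies the Bézout property (for all nonzero x, y ∈ A there exist c, d ∈ A with ν(cx + dy) = inf(ν(x), ν(y)), with cx+dy ≠ 0), then every finitely generated ideal of A is principal. -/

import Mathlib

/-- If a demi-valuation ν satisfies the Bézout property, then every finitely generated
ideal of its valuation ring is principal. -/
theorem stmt_5 {K : Type*} [Field K] {G : Type*} [Lattice G] [AddCommGroup G]
    [CovariantClass G G (· + ·) (· ≤ ·)]
    (ν : K → G)
    (hmul : ∀ a b : K, a ≠ 0 → b ≠ 0 → ν (a * b) = ν a + ν b)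
    (hadd : ∀ a b : K, a ≠ 0 → b ≠ 0 → a + b ≠ 0 → ν a ⊓ ν b ≤ ν (a + b))
    (S : Subring K) (hS : ∀ x : K, x ∈ S ↔ (x = 0 ∨ (x ≠ 0 ∧ 0 ≤ ν x)))
    (hbez : ∀ x y : K, x ∈ S → y ∈ S → x ≠ 0 → y ≠ 0 →
      ∃ c d : K, c ∈ S ∧ d ∈ S ∧ c * x + d * y ≠ 0 ∧ ν (c * x + d * y) = ν x ⊓ ν y) :
    ∀ J : Ideal S, J.FG → J.IsPrincipal := by
  have hone : ν 1 = 0 := by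
    have h := hmul 1 1 one_ne_zero one_ne_zero
    rw [one_mul] at h
    exact (left_eq_add.mp h)
  have hinv : ∀ z : K, z ≠ 0 → ν z⁻¹ = -ν z := by
    intro z hz
    have h := hmul z z⁻¹ hz (inv_ne_zero hz)
    rw [mul_inv_cancel₀ hz, hone] at h
    exact eq_neg_of_add_eq_zero_right h.symm
  -- key two-generator lemma
  have key : ∀ x y : S, ∃ z : S, Ideal.span ({x, y} : Set S) = Ideal.span {z} := by
    intro x y
    by_cases hx : x = 0
    · exact ⟨y, by rw [hx]; exact Submodule.span_insert_zero⟩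
    by_cases hy : y = 0
    · exact ⟨x, by rw [hy, Ideal.span_pair_comm]; exact Submodule.span_insert_zero⟩
    have hxK : (x : K) ≠ 0 := fun h => hx (Subtype.ext h)
    have hyK : (y : K) ≠ 0 := fun h => hy (Subtype.ext h)
    obtain ⟨c, d, hc, hd, hzne, hzval⟩ := hbez x y x.2 y.2 hxK hyK
    set z : K := c * x + d * y with hzdef
    have hzS : z ∈ S := S.add_mem (S.mul_mem hc x.2) (S.mul_mem hd y.2)
    refine ⟨⟨z, hzS⟩, ?_⟩
    have hdvd : ∀ w : S, (w : K) ≠ 0 → ν z ≤ ν w → w ∈ Ideal.span ({⟨z, hzS⟩} : Set S) := by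
      intro w hwK hle
      have hsK : (w : K) * z⁻¹ ≠ 0 := mul_ne_zero hwK (inv_ne_zero hzne)
      have hsS : (w : K) * z⁻¹ ∈ S := by
        rw [hS]
        right
        refine ⟨hsK, ?_⟩
        rw [hmul _ _ hwK (inv_ne_zero hzne), hinv z hzne, ← sub_eq_add_neg]
        exact sub_nonneg.mpr hle
      rw [Ideal.mem_span_singleton]
      refine ⟨⟨(w : K) * z⁻¹, hsS⟩, ?_⟩
      ext
      push_cast
      field_simp
    apply le_antisymm
    · rw [Ideal.span_le]
      intro w hw
      simp only [Set.mem_insert_iff, Set.mem_singleton_iff] at hw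
      rcases hw with hw | hw
      · rw [hw]; exact hdvd x hxK (by rw [hzval]; exact inf_le_left)
      · rw [hw]; exact hdvd y hyK (by rw [hzval]; exact inf_le_right)
    · rw [Ideal.span_le, Set.singleton_subset_iff]
      rw [SetLike.mem_coe, Ideal.mem_span_pair]
      exact ⟨⟨c, hc⟩, ⟨d, hd⟩, rfl⟩
  intro J hJ
  refine Submodule.fg_induction (motive := fun I _ => I.IsPrincipal) ?_ ?_ J hJ
  · intro x; exact ⟨⟨x, rfl⟩⟩
  · intro M N _ _ hM hN
    obtain ⟨a, rfl⟩ := hM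
    obtain ⟨b, rfl⟩ := hN
    obtain ⟨z, hz⟩ := key a b
    refine ⟨⟨z, ?_⟩⟩
    rw [← Submodule.span_union, Set.singleton_union]
    exact hz
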